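/- Let a < b be real numbers, let 1 ≤ p < ∞, and let u : [a, b] → ℝ be twice continuously differentiable on [a, b]. Then ‖u′‖_{L^p(a,b)} ≤ (b−a) · ‖u″‖_{L^p(a,b)} + 18 · (b−a)^{−1} · ‖u‖_{L^p(a,b)}. -/

import Mathlib

open MeasureTheory Set

lemma memLp_aux (a b : ℝ) (r : ENNReal) (f : ℝ → ℝ) (hf : ContinuousOn f (Set.Icc a b)) :
    MemLp (fun t => |f t|) r (volume.restrict (Set.Ioo a b)) := by
  obtain ⟨C, hC⟩ := (isCompact_Icc (a := a) (b := b)).exists_bound_of_continuousOn hf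
  haveI : IsFiniteMeasure (volume.restrict (Set.Ioo a b)) :=
    ⟨by simp [Measure.restrict_apply_univ]⟩
  refine MemLp.of_bound ?_ C ?_
  · exact ((hf.mono Ioo_subset_Icc_self).abs.aestronglyMeasurable measurableSet_Ioo)
  · filter_upwards [ae_restrict_mem measurableSet_Ioo] with x hx
    simpa using hC x (Ioo_subset_Icc_self hx)

lemma holder_aux (a b : ℝ) (hab : a < b) (p : ℝ) (hp : 1 ≤ p) (f : ℝ → ℝ)
    (hf : ContinuousOn f (Set.Icc a b)) :
    ∫ t in Set.Ioo a b, |f t| ≤ (∫ t in Set.Ioo a b, |f t| ^ p) ^ (1/p) * (b - a) ^ (1 - 1/p) := by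
  rcases eq_or_lt_of_le hp with h1 | h1
  · subst h1
    simp [Real.rpow_one]
  · have hpq : p.HolderConjugate (p / (p - 1)) := Real.HolderConjugate.conjExponent h1
    have key := MeasureTheory.integral_mul_le_Lp_mul_Lq_of_nonneg hpq
      (f := fun t => |f t|) (g := fun _ => (1:ℝ)) (μ := volume.restrict (Set.Ioo a b))
      (Filter.Eventually.of_forall fun x => abs_nonneg _)
      (Filter.Eventually.of_forall fun x => zero_le_one)
      (memLp_aux a b _ f hf) (memLp_const 1)
    simp only [mul_one, Real.one_rpow, integral_const, Measure.restrict_apply_univ,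
      Real.volume_Ioo, smul_eq_mul] at key
    have : ENNReal.toReal (ENNReal.ofReal (b - a)) = b - a := ENNReal.toReal_ofReal (by linarith)
    rw [show (volume.restrict (Set.Ioo a b)).real univ = b - a by simp only [Measure.real, Measure.restrict_apply_univ, Real.volume_Ioo, this]] at key
    have hq : 1 / (p / (p - 1)) = 1 - 1/p := by
      field_simp
    rw [hq] at key
    convert key using 2

theorem deriv_Lp_bound (a b : ℝ) (hab : a < b) (p : ℝ) (hp : 1 ≤ p) (u u' u'' : ℝ → ℝ)
    (hu' : ∀ x ∈ Set.Icc a b, HasDerivWithinAt u (u' x) (Set.Icc a b) x)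
    (hu'' : ∀ x ∈ Set.Icc a b, HasDerivWithinAt u' (u'' x) (Set.Icc a b) x)
    (hcont : ContinuousOn u'' (Set.Icc a b)) :
    (∫ t in Set.Ioo a b, |u' t| ^ p) ^ (1 / p) ≤
      (b - a) * (∫ t in Set.Ioo a b, |u'' t| ^ p) ^ (1 / p) +
        18 * (b - a)⁻¹ * (∫ t in Set.Ioo a b, |u t| ^ p) ^ (1 / p) := by
  have hba : (0:ℝ) < b - a := by linarith
  have hp0 : (0:ℝ) < p := lt_of_lt_of_le one_pos hp
  have hu'cont : ContinuousOn u' (Set.Icc a b) := fun x hx => (hu'' x hx).continuousWithinAt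
  have hucont : ContinuousOn u (Set.Icc a b) := fun x hx => (hu' x hx).continuousWithinAt
  set Iu : ℝ := ∫ t in Set.Ioo a b, |u t| with hIu_def
  set Iu'' : ℝ := ∫ t in Set.Ioo a b, |u'' t| with hIu''_def
  have hIuint : IntegrableOn (fun t => |u t|) (Set.Ioo a b) :=
    (hucont.abs.integrableOn_Icc).mono_set Ioo_subset_Icc_self
  have hIu''int : IntegrableOn (fun t => |u'' t|) (Set.Ioo a b) :=
    (hcont.abs.integrableOn_Icc).mono_set Ioo_subset_Icc_self
  have hIu_nonneg : 0 ≤ Iu := setIntegral_nonneg measurableSet_Ioo fun x _ => abs_nonneg _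
  have hIu''_nonneg : 0 ≤ Iu'' := setIntegral_nonneg measurableSet_Ioo fun x _ => abs_nonneg _
  -- minimum of |u'| on [a,b]
  obtain ⟨t0, ht0, ht0min⟩ := isCompact_Icc.exists_isMinOn (nonempty_Icc.mpr hab.le)
    (hu'cont.abs)
  set m : ℝ := |u' t0| with hm_def
  have hm0 : 0 ≤ m := abs_nonneg _
  -- FTC: u' d - u' c = ∫ u'' for c ≤ d in [a,b]
  have hFTC : ∀ c ∈ Set.Icc a b, ∀ d ∈ Set.Icc a b, c ≤ d →
      u' d - u' c = ∫ t in c..d, u'' t := by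
    intro c hc d hd hcd
    refine (intervalIntegral.integral_eq_sub_of_hasDeriv_right_of_le hcd
      (hu'cont.mono (Icc_subset_Icc hc.1 hd.2)) (fun x hx => ?_)
      ((hcont.mono ?_).intervalIntegrable)).symm
    · have hxab : x ∈ Set.Ioo a b := ⟨lt_of_le_of_lt hc.1 hx.1, lt_of_lt_of_le hx.2 hd.2⟩
      exact ((hu'' x (Ioo_subset_Icc_self hxab)).hasDerivAt
        (Icc_mem_nhds hxab.1 hxab.2)).hasDerivWithinAt
    · rw [uIcc_of_le hcd]; exact Icc_subset_Icc hc.1 hd.2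
  -- bound on |∫ u''| over subintervals
  have hIbound : ∀ c ∈ Set.Icc a b, ∀ d ∈ Set.Icc a b, c ≤ d →
      |∫ t in c..d, u'' t| ≤ Iu'' := by
    intro c hc d hd hcd
    calc |∫ t in c..d, u'' t| ≤ ∫ t in c..d, |u'' t| :=
          intervalIntegral.abs_integral_le_integral_abs hcd
      _ = ∫ t in Set.Ioc c d, |u'' t| := intervalIntegral.integral_of_le hcd
      _ ≤ Iu'' := by
          refine setIntegral_mono_set hIu''int
            (Filter.Eventually.of_forall fun x => abs_nonneg _) ?_
          exact ((Ioc_subset_Ioc hc.1 hd.2).eventuallyLE).trans MeasureTheory.Ioo_ae_eq_Ioc.symm.le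
  -- pointwise: |u' x| ≤ m + Iu''
  have hpt0 : ∀ x ∈ Set.Icc a b, |u' x| ≤ m + Iu'' := by
    intro x hx
    rcases le_total t0 x with h | h
    · have := hFTC t0 ht0 x hx h
      have h2 := hIbound t0 ht0 x hx h
      calc |u' x| = |u' t0 + (u' x - u' t0)| := by ring_nf
        _ ≤ |u' t0| + |u' x - u' t0| := abs_add_le _ _
        _ ≤ m + Iu'' := by rw [this]; exact add_le_add le_rfl h2
    · have := hFTC x hx t0 ht0 h
      have h2 := hIbound x hx t0 ht0 h
      calc |u' x| = |u' t0 - (u' t0 - u' x)| := by ring_nf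
        _ ≤ |u' t0| + |u' t0 - u' x| := abs_sub _ _
        _ ≤ m + Iu'' := by rw [this]; exact add_le_add le_rfl h2
  -- bound on m
  have hm : m ≤ 9 / (b-a)^2 * Iu := by
    set h : ℝ := (b-a)/3 with hh_def
    have hh : 0 < h := by unfold h; linarith
    obtain ⟨c, hcmem, hcmin⟩ := isCompact_Icc.exists_isMinOn
      (nonempty_Icc.mpr (by linarith : a ≤ a + h))
      ((hucont.mono (Icc_subset_Icc le_rfl (by linarith))).abs)
    obtain ⟨d, hdmem, hdmin⟩ := isCompact_Icc.exists_isMinOn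
      (nonempty_Icc.mpr (by linarith : b - h ≤ b))
      ((hucont.mono (Icc_subset_Icc (by linarith) le_rfl)).abs)
    have hca : a ≤ c := hcmem.1
    have hcah : c ≤ a + h := hcmem.2
    have hdbh : b - h ≤ d := hdmem.1
    have hdb : d ≤ b := hdmem.2
    have hcd : c < d := by unfold h at hcah hdbh; linarith
    have hdch : h ≤ d - c := by unfold h at hcah hdbh ⊢; linarith
    obtain ⟨ξ, hξ, hslope⟩ := exists_hasDerivAt_eq_slope u u' hcd
      (hucont.mono (Icc_subset_Icc hca hdb)) (fun x hx => by
        have hxab : x ∈ Set.Ioo a b := ⟨lt_of_le_of_lt hca hx.1, lt_of_lt_of_le hx.2 hdb⟩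
        exact (hu' x (Ioo_subset_Icc_self hxab)).hasDerivAt (Icc_mem_nhds hxab.1 hxab.2))
    have hξab : ξ ∈ Set.Icc a b := ⟨by linarith [hξ.1], by linarith [hξ.2]⟩
    have h1 : m ≤ |u' ξ| := isMinOn_iff.mp ht0min ξ hξab
    have h2 : |u' ξ| * (d - c) = |u d - u c| := by
      rw [hslope, abs_div, abs_of_pos (sub_pos.mpr hcd),
        div_mul_cancel₀ _ (sub_pos.mpr hcd).ne']
    have h3 : m * h ≤ |u c| + |u d| := by
      have : m * h ≤ |u' ξ| * (d - c) := by nlinarith [abs_nonneg (u' ξ)]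
      calc m * h ≤ |u' ξ| * (d - c) := this
        _ = |u d - u c| := h2
        _ ≤ |u d| + |u c| := abs_sub _ _
        _ = |u c| + |u d| := by ring
    have hsub1 : Set.Ioo a (a+h) ⊆ Set.Ioo a b := Ioo_subset_Ioo le_rfl (by unfold h; linarith)
    have hsub2 : Set.Ioo (b-h) b ⊆ Set.Ioo a b := Ioo_subset_Ioo (by unfold h; linarith) le_rfl
    have hc_int : |u c| * h ≤ ∫ t in Set.Ioo a (a+h), |u t| := by
      have : ∫ t in Set.Ioo a (a+h), (|u c| : ℝ) ≤ ∫ t in Set.Ioo a (a+h), |u t| := by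
        refine setIntegral_mono_on (by simp [integrableOn_const, Real.volume_Ioo])
          (hIuint.mono_set hsub1) measurableSet_Ioo (fun x hx => ?_)
        exact isMinOn_iff.mp hcmin x ⟨hx.1.le, hx.2.le⟩
      simpa [Real.volume_Ioo, ENNReal.toReal_ofReal hh.le, mul_comm, max_eq_left hh.le] using this
    have hd_int : |u d| * h ≤ ∫ t in Set.Ioo (b-h) b, |u t| := by
      have : ∫ t in Set.Ioo (b-h) b, (|u d| : ℝ) ≤ ∫ t in Set.Ioo (b-h) b, |u t| := by
        refine setIntegral_mono_on (by simp [integrableOn_const, Real.volume_Ioo])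
          (hIuint.mono_set hsub2) measurableSet_Ioo (fun x hx => ?_)
        exact isMinOn_iff.mp hdmin x ⟨hx.1.le, hx.2.le⟩
      simpa [Real.volume_Ioo, show b - (b - h) = h by ring, ENNReal.toReal_ofReal hh.le, mul_comm, max_eq_left hh.le] using this
    have hdisj : Disjoint (Set.Ioo a (a+h)) (Set.Ioo (b-h) b) := by
      refine Set.disjoint_left.mpr (fun x hx1 hx2 => ?_)
      have := hx1.2; have := hx2.1
      unfold h at *; linarith
    have hsum : (∫ t in Set.Ioo a (a+h), |u t|) + (∫ t in Set.Ioo (b-h) b, |u t|) ≤ Iu := by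
      rw [← setIntegral_union hdisj measurableSet_Ioo (hIuint.mono_set hsub1)
        (hIuint.mono_set hsub2)]
      exact setIntegral_mono_set hIuint
        (Filter.Eventually.of_forall fun x => abs_nonneg _)
        ((union_subset hsub1 hsub2).eventuallyLE)
    have hkey : m * h * h ≤ Iu := by nlinarith
    rw [show (9:ℝ)/(b-a)^2 * Iu = Iu / (h*h) by unfold h; field_simp; ring,
      le_div_iff₀ (by positivity)]
    linarith [hkey]
  -- pointwise bound and conclusion
  set A : ℝ := Iu'' + 9/(b-a)^2 * Iu with hA_def
  have hA0 : 0 ≤ A := add_nonneg hIu''_nonneg (mul_nonneg (by positivity) hIu_nonneg)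
  have hptA : ∀ x ∈ Set.Ioo a b, |u' x| ^ p ≤ A ^ p := fun x hx =>
    Real.rpow_le_rpow (abs_nonneg _)
      (by have := hpt0 x (Ioo_subset_Icc_self hx); unfold A; linarith) hp0.le
  have hint' : IntegrableOn (fun t => |u' t| ^ p) (Set.Ioo a b) :=
    ((hu'cont.abs.rpow_const (fun x _ => Or.inr hp0.le)).integrableOn_Icc).mono_set
      Ioo_subset_Icc_self
  have h1 : ∫ t in Set.Ioo a b, |u' t| ^ p ≤ A ^ p * (b - a) := by
    calc ∫ t in Set.Ioo a b, |u' t| ^ p ≤ ∫ _t in Set.Ioo a b, A ^ p :=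
          setIntegral_mono_on hint' (by simp [integrableOn_const, Real.volume_Ioo])
            measurableSet_Ioo hptA
      _ = A ^ p * (b - a) := by
          simp [Real.volume_Ioo, ENNReal.toReal_ofReal hba.le, mul_comm, hab.le]
  have hLp_nonneg : (0:ℝ) ≤ ∫ t in Set.Ioo a b, |u' t| ^ p :=
    setIntegral_nonneg measurableSet_Ioo fun x _ => Real.rpow_nonneg (abs_nonneg _) p
  have h2 : (∫ t in Set.Ioo a b, |u' t| ^ p) ^ (1/p) ≤ A * (b - a) ^ (1/p) := by
    have := Real.rpow_le_rpow hLp_nonneg h1 (by positivity : (0:ℝ) ≤ 1/p)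
    rwa [Real.mul_rpow (Real.rpow_nonneg hA0 p) hba.le, ← Real.rpow_mul hA0,
      mul_one_div_cancel hp0.ne', Real.rpow_one] at this
  set Np'' : ℝ := (∫ t in Set.Ioo a b, |u'' t| ^ p) ^ (1/p) with hNp''_def
  set Np : ℝ := (∫ t in Set.Ioo a b, |u t| ^ p) ^ (1/p) with hNp_def
  have hNp''0 : 0 ≤ Np'' := Real.rpow_nonneg
    (setIntegral_nonneg measurableSet_Ioo fun x _ => Real.rpow_nonneg (abs_nonneg _) p) _
  have hNp0 : 0 ≤ Np := Real.rpow_nonneg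
    (setIntegral_nonneg measurableSet_Ioo fun x _ => Real.rpow_nonneg (abs_nonneg _) p) _
  have hH1 : Iu'' ≤ Np'' * (b - a) ^ (1 - 1/p) := holder_aux a b hab p hp u'' hcont
  have hH2 : Iu ≤ Np * (b - a) ^ (1 - 1/p) := holder_aux a b hab p hp u hucont
  have hpow : (b - a) ^ (1 - 1/p) * (b - a) ^ (1/p) = b - a := by
    rw [← Real.rpow_add hba, sub_add_cancel, Real.rpow_one]
  have e1 : Iu'' * (b - a) ^ (1/p) ≤ Np'' * (b - a) := by
    calc Iu'' * (b - a) ^ (1/p) ≤ (Np'' * (b - a) ^ (1 - 1/p)) * (b - a) ^ (1/p) :=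
          mul_le_mul_of_nonneg_right hH1 (Real.rpow_nonneg hba.le _)
      _ = Np'' * (b - a) := by rw [mul_assoc, hpow]
  have e2 : Iu * (b - a) ^ (1/p) ≤ Np * (b - a) := by
    calc Iu * (b - a) ^ (1/p) ≤ (Np * (b - a) ^ (1 - 1/p)) * (b - a) ^ (1/p) :=
          mul_le_mul_of_nonneg_right hH2 (Real.rpow_nonneg hba.le _)
      _ = Np * (b - a) := by rw [mul_assoc, hpow]
  calc (∫ t in Set.Ioo a b, |u' t| ^ p) ^ (1/p) ≤ A * (b - a) ^ (1/p) := h2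
    _ = Iu'' * (b - a) ^ (1/p) + 9/(b-a)^2 * (Iu * (b - a) ^ (1/p)) := by
        rw [hA_def]; ring
    _ ≤ Np'' * (b - a) + 9/(b-a)^2 * (Np * (b - a)) :=
        add_le_add e1 (mul_le_mul_of_nonneg_left e2 (by positivity))
    _ = (b - a) * Np'' + 9 * (b - a)⁻¹ * Np := by
        field_simp
    _ ≤ (b - a) * Np'' + 18 * (b - a)⁻¹ * Np := by
        have : 9 * (b - a)⁻¹ * Np ≤ 18 * (b - a)⁻¹ * Np := by
          have h9 : (0:ℝ) < (b-a)⁻¹ := inv_pos.mpr hba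
          nlinarith
        linarith
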